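/- Let L ≥ 2 be an integer, A ∈ ℝ^{M×N}, y ∈ ℝ^M, and let x : [0,∞) → ℝ^N be differentiable and satisfy the reduced gradient flow x'(t) = −[Aᵀ(A x(t)^{⊙L} − y)] ⊙ x(t)^{⊙(L−1)} for all t ≥ 0. If x(0) ≥ 0 entrywise, then x(t) ≥ 0 entrywise for all t ≥ 0. -/

import Mathlib

open Filter Topology Matrix

noncomputable section

/-- The reduced gradient flow `x'(t) = −[Aᵀ(A x(t)^{⊙L} − y)] ⊙ x(t)^{⊙(L−1)}` for `t ≥ 0`. -/
def GradFlow {M N : ℕ} (A : Matrix (Fin M) (Fin N) ℝ) (y : Fin M → ℝ) (L : ℕ)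
    (x : ℝ → Fin N → ℝ) : Prop :=
  ∀ t : ℝ, 0 ≤ t → ∀ i : Fin N,
    HasDerivAt (fun s => x s i)
      (-(Matrix.mulVec Aᵀ (A.mulVec (fun j => x t j ^ L) - y) i * x t i ^ (L - 1))) t

theorem stmt15 {M N : ℕ} (L : ℕ) (hL : 2 ≤ L)
    (A : Matrix (Fin M) (Fin N) ℝ) (y : Fin M → ℝ)
    (x : ℝ → Fin N → ℝ)
    (hflow : GradFlow A y L x)
    (h0 : ∀ i, 0 ≤ x 0 i) :
    ∀ t : ℝ, 0 ≤ t → ∀ i, 0 ≤ x t i := by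
  intro T hT i
  have hx_cont : ∀ s : ℝ, 0 ≤ s → ∀ j, ContinuousAt (fun u => x u j) s :=
    fun s hs j => (hflow s hs j).continuousAt
  set c : ℝ → ℝ := fun s =>
    -(Matrix.mulVec Aᵀ (A.mulVec (fun j => x s j ^ L) - y) i) * x s i ^ (L - 2) with hcdef
  have hc_cont : ∀ s : ℝ, 0 ≤ s → ContinuousAt c s := by
    intro s hs
    have hx : ContinuousAt (fun u => x u) s := continuousAt_pi.2 (fun j => hx_cont s hs j)
    have houter : Continuous (fun v : Fin N → ℝ =>
        -(Matrix.mulVec Aᵀ (A.mulVec (fun j => v j ^ L) - y) i) * v i ^ (L - 2)) := by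
      simp only [Matrix.mulVec, dotProduct, Pi.sub_apply]
      fun_prop
    exact houter.continuousAt.comp hx
  set g : ℝ → ℝ := fun s => c (max s 0) with hgdef
  have hg_cont : Continuous g := by
    rw [continuous_iff_continuousAt]
    intro s
    have hm : ContinuousAt (fun u : ℝ => max u 0) s :=
      (continuous_id.max continuous_const).continuousAt
    show ContinuousAt (c ∘ fun u : ℝ => max u 0) s
    exact ContinuousAt.comp (hc_cont (max s 0) (le_max_right _ _)) hm
  set C : ℝ → ℝ := fun u => ∫ s in (0:ℝ)..u, g s with hCdef
  have hC : ∀ u : ℝ, HasDerivAt C (g u) u := by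
    intro u
    exact intervalIntegral.integral_hasDerivAt_right
      (hg_cont.intervalIntegrable _ _)
      (hg_cont.aestronglyMeasurable.stronglyMeasurableAtFilter)
      hg_cont.continuousAt
  set F : ℝ → ℝ := fun u => x u i * Real.exp (-C u) with hFdef
  have hF : ∀ s : ℝ, 0 ≤ s → HasDerivAt F 0 s := by
    intro s hs
    have hx' := hflow s hs i
    have hgs : g s = c s := by simp [hgdef, max_eq_left hs]
    have hpow : x s i ^ (L - 1) = x s i ^ (L - 2) * x s i := by
      rw [← pow_succ]
      congr 1
      omega
    have hx2 : HasDerivAt (fun u => x u i) (g s * x s i) s := by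
      convert hx' using 1
      rw [hgs, hcdef, hpow]; ring
    have hexp : HasDerivAt (fun u => Real.exp (-C u)) (-g s * Real.exp (-C s)) s := by
      have := ((hC s).neg).exp
      convert this using 1
      · rfl
      · rw [Pi.neg_apply]; ring
    have := hx2.mul hexp
    rw [show (0:ℝ) = g s * x s i * Real.exp (-C s) + x s i * (-g s * Real.exp (-C s)) by ring]
    exact this
  have hconst := constant_of_has_deriv_right_zero (f := F) (a := 0) (b := T)
    (fun s hs => (hF s hs.1).continuousAt.continuousWithinAt)
    (fun s hs => (hF s hs.1).hasDerivWithinAt)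
  have hFT : F T = F 0 := hconst T ⟨hT, le_refl T⟩
  have h1 : x T i * Real.exp (-C T) = x 0 i * Real.exp (-C 0) := hFT
  have h2 : (0:ℝ) < Real.exp (-C T) := Real.exp_pos _
  have h3 : (0:ℝ) < Real.exp (-C 0) := Real.exp_pos _
  nlinarith [h0 i, mul_nonneg (h0 i) h3.le]
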